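/- Let α ∈ (1,2). For τ > 0, set a(τ) = 1 − e^{−τ}, let G : ℝ² → ℂ be the inverse Fourier transform of ξ ↦ e^{−‖ξ‖^α}, and define (S_τ f)(η) = e^{(1−1/α)τ} a(τ)^{−2/α} ∫_{ℝ²} G((η − p)/a(τ)^{1/α}) f(e^{τ/α} p) dp. Then for every Schwartz function f on ℝ², every τ > 0, and j ∈ {1,2}, the function S_τ f is continuously differentiable and S_τ(∂_j f) = e^{−τ/α} ∂_j (S_τ f) pointwise on ℝ². In semigroup notation: e^{τ𝓛} ∇ = e^{−τ/α} ∇ e^{τ𝓛}. -/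

import Mathlib

open MeasureTheory Real
open scoped FourierTransform ENNReal

set_option synthInstance.maxHeartbeats 1000000
set_option maxHeartbeats 1000000

noncomputable section

/-- The profile `G`: the inverse Fourier transform of `ξ ↦ e^{-‖ξ‖^α}` on `ℝ²`. -/
def Gprof (α : ℝ) : EuclideanSpace ℝ (Fin 2) → ℂ :=
  𝓕⁻ (fun ξ : EuclideanSpace ℝ (Fin 2) => (Real.exp (-‖ξ‖ ^ α) : ℂ))

/-- The semigroup `e^{τ𝓛}` in convolution form:
`(S_τ f)(η) = e^{(1-1/α)τ} a(τ)^{-2/α} ∫ G((η-p)/a(τ)^{1/α}) f(e^{τ/α} p) dp`,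
with `a(τ) = 1 - e^{-τ}`. -/
def Sop (α τ : ℝ) (f : EuclideanSpace ℝ (Fin 2) → ℂ) :
    EuclideanSpace ℝ (Fin 2) → ℂ := fun η =>
  (Real.exp ((1 - 1 / α) * τ) * (1 - Real.exp (-τ)) ^ (-(2 / α)) : ℝ) •
    ∫ p : EuclideanSpace ℝ (Fin 2),
      Gprof α ((((1 - Real.exp (-τ)) ^ (1 / α) : ℝ)⁻¹) • (η - p)) * f (Real.exp (τ / α) • p)

namespace Aux7

local notation "E2" => EuclideanSpace ℝ (Fin 2)

variable {W : Type*} [NormedAddCommGroup W] [NormedSpace ℝ W]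

/-- Cubic decay of a Schwartz function. -/
lemma schwartz_decay3 (ψ : SchwartzMap E2 W) :
    ∃ D : ℝ, 0 ≤ D ∧ ∀ x : E2, ‖ψ x‖ ≤ D * ((1 + ‖x‖) ^ (3 : ℕ))⁻¹ := by
  refine ⟨2 ^ 3 * (Finset.Iic ((3 : ℕ), (0 : ℕ))).sup
      (fun m => SchwartzMap.seminorm ℝ m.1 m.2) ψ, by positivity, fun x => ?_⟩
  have h := SchwartzMap.one_add_le_sup_seminorm_apply (𝕜 := ℝ)
    (m := ((3 : ℕ), (0 : ℕ))) le_rfl le_rfl ψ x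
  rw [norm_iteratedFDeriv_zero] at h
  have hp : (0 : ℝ) < (1 + ‖x‖) ^ (3 : ℕ) := by positivity
  rw [← div_eq_mul_inv, le_div_iff₀ hp, mul_comm]
  exact h

lemma integrable_decay3 :
    Integrable (fun x : E2 => ((1 + ‖x‖) ^ (3 : ℕ))⁻¹) := by
  have h : Integrable (fun x : E2 => (1 + ‖x‖) ^ (-(3 : ℝ))) :=
    integrable_one_add_norm (by simp [finrank_euclideanSpace]; norm_num)
  refine h.congr (Filter.Eventually.of_forall fun x => ?_)
  show (1 + ‖x‖) ^ (-(3:ℝ)) = ((1 + ‖x‖) ^ (3:ℕ))⁻¹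
  rw [← Real.rpow_natCast (1 + ‖x‖) 3, ← Real.rpow_neg (by positivity)]
  norm_num

/-- Peetre-type inequality. -/
lemma peetre (η u : E2) :
    ((1 + ‖η - u‖) ^ (3 : ℕ))⁻¹ ≤ (1 + ‖η‖) ^ (3 : ℕ) * ((1 + ‖u‖) ^ (3 : ℕ))⁻¹ := by
  have h0 : ‖u‖ ≤ ‖η - u‖ + ‖η‖ := by
    calc ‖u‖ = ‖η - (η - u)‖ := by rw [sub_sub_cancel]
    _ ≤ ‖η‖ + ‖η - u‖ := norm_sub_le _ _
    _ = ‖η - u‖ + ‖η‖ := by ring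
  have h1 : (1 + ‖u‖) ≤ (1 + ‖η‖) * (1 + ‖η - u‖) := by
    nlinarith [norm_nonneg (η - u), norm_nonneg η]
  have ha : (0 : ℝ) < (1 + ‖η - u‖) ^ (3 : ℕ) := by positivity
  have hc : (0 : ℝ) < (1 + ‖u‖) ^ (3 : ℕ) := by positivity
  rw [← div_eq_mul_inv, le_div_iff₀ hc, inv_mul_eq_div, div_le_iff₀ ha]
  calc (1 + ‖u‖) ^ (3 : ℕ) ≤ ((1 + ‖η‖) * (1 + ‖η - u‖)) ^ (3 : ℕ) :=
        pow_le_pow_left₀ (by positivity) h1 3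
  _ = (1 + ‖η‖) ^ (3 : ℕ) * (1 + ‖η - u‖) ^ (3 : ℕ) := mul_pow _ _ _

/-- Uniform bound for translates of a Schwartz function near a point. -/
lemma schwartz_unif_bound (ψ : SchwartzMap E2 W) :
    ∃ D : ℝ, 0 ≤ D ∧ ∀ (η₀ η u : E2), ‖η - η₀‖ ≤ 1 →
      ‖ψ (η - u)‖ ≤ D * (2 + ‖η₀‖) ^ (3 : ℕ) * ((1 + ‖u‖) ^ (3 : ℕ))⁻¹ := by
  obtain ⟨D, hD0, hD⟩ := schwartz_decay3 ψ
  refine ⟨D, hD0, fun η₀ η u hη => ?_⟩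
  have h1 : ‖ψ (η - u)‖ ≤ D * ((1 + ‖η - u‖) ^ (3 : ℕ))⁻¹ := hD _
  have h2 := peetre η u
  have h3 : (1 + ‖η‖) ^ (3 : ℕ) ≤ (2 + ‖η₀‖) ^ (3 : ℕ) := by
    apply pow_le_pow_left₀ (by positivity)
    have : ‖η‖ ≤ ‖η₀‖ + 1 := by
      calc ‖η‖ = ‖η₀ + (η - η₀)‖ := by congr 1; abel
      _ ≤ ‖η₀‖ + ‖η - η₀‖ := norm_add_le _ _
      _ ≤ ‖η₀‖ + 1 := by linarith
    linarith
  have hu : (0 : ℝ) ≤ ((1 + ‖u‖) ^ (3 : ℕ))⁻¹ := by positivity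
  calc ‖ψ (η - u)‖ ≤ D * ((1 + ‖η - u‖) ^ (3 : ℕ))⁻¹ := h1
  _ ≤ D * ((1 + ‖η‖) ^ (3 : ℕ) * ((1 + ‖u‖) ^ (3 : ℕ))⁻¹) := by
      exact mul_le_mul_of_nonneg_left h2 hD0
  _ ≤ D * ((2 + ‖η₀‖) ^ (3 : ℕ) * ((1 + ‖u‖) ^ (3 : ℕ))⁻¹) := by
      apply mul_le_mul_of_nonneg_left _ hD0
      exact mul_le_mul_of_nonneg_right h3 hu
  _ = D * (2 + ‖η₀‖) ^ (3 : ℕ) * ((1 + ‖u‖) ^ (3 : ℕ))⁻¹ := by ring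

variable [NormedSpace ℂ W]

variable {g : E2 → ℂ} {C : ℝ}

lemma convA (hgc : Continuous g) (hgb : ∀ x, ‖g x‖ ≤ C) (ψ : SchwartzMap E2 W) (η : E2) :
    Integrable (fun u : E2 => g u • ψ (η - u)) := by
  have hm : AEStronglyMeasurable (fun u : E2 => g u • ψ (η - u)) volume :=
    (hgc.aestronglyMeasurable).smul
      ((ψ.continuous.comp (continuous_const.sub continuous_id)).aestronglyMeasurable)
  have hi : Integrable (fun u : E2 => C * ‖ψ (η - u)‖) :=
    (((ψ.integrable (μ := volume)).norm).comp_sub_left η).const_mul C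
  refine hi.mono' hm (Filter.Eventually.of_forall fun u => ?_)
  rw [norm_smul]
  exact mul_le_mul_of_nonneg_right (hgb u) (norm_nonneg _)

lemma convB (hgc : Continuous g) (hgb : ∀ x, ‖g x‖ ≤ C) (ψ : SchwartzMap E2 W) :
    Continuous (fun η : E2 => ∫ u : E2, g u • ψ (η - u)) := by
  have hC0 : 0 ≤ C := le_trans (norm_nonneg _) (hgb 0)
  obtain ⟨D, hD0, hD⟩ := schwartz_unif_bound ψ
  rw [continuous_iff_continuousAt]
  intro η₀
  apply continuousAt_of_dominated
    (bound := fun u : E2 => C * (D * (2 + ‖η₀‖) ^ (3 : ℕ) * ((1 + ‖u‖) ^ (3 : ℕ))⁻¹))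
  · exact Filter.Eventually.of_forall fun η =>
      (hgc.aestronglyMeasurable).smul
        ((ψ.continuous.comp (continuous_const.sub continuous_id)).aestronglyMeasurable)
  · have hball : Metric.ball η₀ 1 ∈ nhds η₀ := Metric.ball_mem_nhds η₀ one_pos
    filter_upwards [hball] with η hη
    refine Filter.Eventually.of_forall fun u => ?_
    rw [norm_smul]
    have h1 : ‖ψ (η - u)‖ ≤ D * (2 + ‖η₀‖) ^ (3 : ℕ) * ((1 + ‖u‖) ^ (3 : ℕ))⁻¹ :=
      hD η₀ η u (by simpa [dist_eq_norm] using hη.le)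
    exact mul_le_mul (hgb u) h1 (norm_nonneg _) hC0
  · exact (integrable_decay3.const_mul _).const_mul C
  · exact Filter.Eventually.of_forall fun u =>
      (continuous_const.smul (ψ.continuous.comp (continuous_id.sub continuous_const))).continuousAt

lemma convC (hgc : Continuous g) (hgb : ∀ x, ‖g x‖ ≤ C) (ψ : SchwartzMap E2 ℂ) (η₀ : E2) :
    HasFDerivAt (fun η : E2 => ∫ u : E2, g u • ψ (η - u))
      (∫ u : E2, g u • (SchwartzMap.fderivCLM ℝ _ _ ψ) (η₀ - u)) η₀ := by
  have hC0 : 0 ≤ C := le_trans (norm_nonneg _) (hgb 0)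
  obtain ⟨D, hD0, hD⟩ := schwartz_unif_bound (SchwartzMap.fderivCLM ℝ _ _ ψ)
  apply hasFDerivAt_integral_of_dominated_of_fderiv_le
    (F' := fun η (u : E2) => g u • (SchwartzMap.fderivCLM ℝ _ _ ψ) (η - u))
    (bound := fun u : E2 => C * (D * (2 + ‖η₀‖) ^ (3 : ℕ) * ((1 + ‖u‖) ^ (3 : ℕ))⁻¹))
    (s := Metric.ball η₀ 1) (Metric.ball_mem_nhds η₀ one_pos)
  · exact Filter.Eventually.of_forall fun η =>
      (hgc.aestronglyMeasurable).smul
        ((ψ.continuous.comp (continuous_const.sub continuous_id)).aestronglyMeasurable)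
  · exact convA hgc hgb ψ η₀
  · exact (hgc.aestronglyMeasurable).smul
      (((SchwartzMap.fderivCLM ℝ _ _ ψ).continuous.comp
        (continuous_const.sub continuous_id)).aestronglyMeasurable)
  · refine Filter.Eventually.of_forall fun u => fun η hη => ?_
    refine le_trans (norm_smul_le (α := ℂ) (β := E2 →L[ℝ] ℂ) (g u) _) ?_
    have h1 : ‖(SchwartzMap.fderivCLM ℝ _ _ ψ) (η - u)‖
        ≤ D * (2 + ‖η₀‖) ^ (3 : ℕ) * ((1 + ‖u‖) ^ (3 : ℕ))⁻¹ :=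
      hD η₀ η u (by simpa [dist_eq_norm] using (Metric.mem_ball.mp hη).le)
    exact mul_le_mul (hgb u) h1 (norm_nonneg _) hC0
  · exact (integrable_decay3.const_mul _).const_mul C
  · refine Filter.Eventually.of_forall fun u => fun η _ => ?_
    have h1 : HasFDerivAt (fun η : E2 => η - u) (ContinuousLinearMap.id ℝ E2) η :=
      (hasFDerivAt_id η).sub_const u
    have h2 : HasFDerivAt (⇑ψ) (fderiv ℝ (⇑ψ) (η - u)) (η - u) :=
      (ψ.differentiable.differentiableAt).hasFDerivAt
    have h3 : HasFDerivAt (fun η : E2 => ψ (η - u)) (fderiv ℝ (⇑ψ) (η - u)) η := by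
      exact h2.comp η h1
    have h4 := h3.const_smul (g u)
    exact h4

end Aux7

open Aux7 in
/-- The commutation formula (4.6) of the paper: `e^{τ𝓛} ∂_j f = e^{-τ/α} ∂_j (e^{τ𝓛} f)` for
Schwartz `f`, and `S_τ f` is continuously differentiable. -/
theorem statement7 (α τ : ℝ) (hα1 : 1 < α) (hα2 : α < 2) (hτ : 0 < τ)
    (f : SchwartzMap (EuclideanSpace ℝ (Fin 2)) ℂ) (j : Fin 2) :
    ContDiff ℝ 1 (Sop α τ ⇑f) ∧
    ∀ η : EuclideanSpace ℝ (Fin 2),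
      Sop α τ (fun x => fderiv ℝ (⇑f) x (EuclideanSpace.single j 1)) η
        = ((Real.exp (-(τ / α)) : ℝ) : ℂ)
            * fderiv ℝ (Sop α τ ⇑f) η (EuclideanSpace.single j 1) := by
  have hα0 : 0 < α := lt_trans one_pos hα1
  set b : ℝ := 1 - Real.exp (-τ) with hb_def
  set B : ℝ := (b ^ (1 / α))⁻¹ with hB_def
  set c : ℝ := Real.exp ((1 - 1 / α) * τ) * b ^ (-(2 / α)) with hc_def
  set e : ℝ := Real.exp (τ / α) with he_def
  have he : 0 < e := Real.exp_pos _
  have hene : e ≠ 0 := ne_of_gt he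
  -- integrability of the symbol
  have hsymR : Integrable (fun ξ : EuclideanSpace ℝ (Fin 2) => Real.exp (-‖ξ‖ ^ α)) := by
    have hbound : ∀ ξ : EuclideanSpace ℝ (Fin 2),
        ‖Real.exp (-‖ξ‖ ^ α)‖ ≤ 6 * Real.exp 1 * ((1 + ‖ξ‖) ^ (3 : ℕ))⁻¹ := by
      intro ξ
      have ht : (0 : ℝ) ≤ ‖ξ‖ := norm_nonneg ξ
      have hpos : (0 : ℝ) < (1 + ‖ξ‖) ^ (3 : ℕ) := by positivity
      rw [Real.norm_eq_abs, abs_of_pos (Real.exp_pos _), ← div_eq_mul_inv, le_div_iff₀ hpos]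
      rcases le_total ‖ξ‖ 1 with h | h
      · have h1 : Real.exp (-‖ξ‖ ^ α) ≤ 1 :=
          Real.exp_le_one_iff.mpr (neg_nonpos.mpr (Real.rpow_nonneg ht α))
        have h2 : (1 + ‖ξ‖) ^ (3 : ℕ) ≤ 8 := by
          have h2' : (1 + ‖ξ‖) ≤ 2 := by linarith
          calc (1 + ‖ξ‖) ^ (3 : ℕ) ≤ 2 ^ (3 : ℕ) := by
                exact pow_le_pow_left₀ (by positivity) h2' 3
          _ = 8 := by norm_num
        nlinarith [Real.exp_one_gt_d9]
      · have h1 : ‖ξ‖ ≤ ‖ξ‖ ^ α := by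
          calc ‖ξ‖ = ‖ξ‖ ^ (1 : ℝ) := (Real.rpow_one _).symm
          _ ≤ ‖ξ‖ ^ α := Real.rpow_le_rpow_of_exponent_le h hα1.le
        have h2 : Real.exp (-‖ξ‖ ^ α) ≤ Real.exp (-‖ξ‖) := Real.exp_le_exp.mpr (by linarith)
        have h3 : (1 + ‖ξ‖) ^ (3 : ℕ) ≤ 6 * Real.exp (1 + ‖ξ‖) := by
          have h4 := Real.pow_div_factorial_le_exp (x := 1 + ‖ξ‖) (by linarith) 3
          norm_num [Nat.factorial] at h4
          linarith
        calc Real.exp (-‖ξ‖ ^ α) * (1 + ‖ξ‖) ^ (3 : ℕ)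
            ≤ Real.exp (-‖ξ‖) * (6 * Real.exp (1 + ‖ξ‖)) := by
              apply mul_le_mul h2 h3 (by positivity) (Real.exp_pos _).le
        _ = 6 * (Real.exp (-‖ξ‖) * Real.exp (1 + ‖ξ‖)) := by ring
        _ = 6 * Real.exp 1 := by rw [← Real.exp_add]; congr 1; ring
    refine (Aux7.integrable_decay3.const_mul (6 * Real.exp 1)).mono'
      ?_ (Filter.Eventually.of_forall hbound)
    exact ((continuous_norm.rpow_const (fun x => Or.inr hα0.le)).neg.rexp).aestronglyMeasurable
  have hsym : Integrable (fun ξ : EuclideanSpace ℝ (Fin 2) => (Real.exp (-‖ξ‖ ^ α) : ℂ)) :=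
    hsymR.ofReal
  -- continuity and boundedness of the profile
  have hGc : Continuous (Gprof α) := by
    change Continuous (VectorFourier.fourierIntegral Real.fourierChar volume
      (-innerₗ (EuclideanSpace ℝ (Fin 2)))
      (fun ξ : EuclideanSpace ℝ (Fin 2) => (Real.exp (-‖ξ‖ ^ α) : ℂ)))
    apply VectorFourier.fourierIntegral_continuous Real.continuous_fourierChar ?_ hsym
    have : Continuous fun p : EuclideanSpace ℝ (Fin 2) × EuclideanSpace ℝ (Fin 2) =>
        -(inner ℝ p.1 p.2 : ℝ) := continuous_inner.neg
    simpa using this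
  set C : ℝ := ∫ ξ : EuclideanSpace ℝ (Fin 2), ‖(Real.exp (-‖ξ‖ ^ α) : ℂ)‖ with hC_def
  have hGb : ∀ x : EuclideanSpace ℝ (Fin 2), ‖Gprof α x‖ ≤ C := by
    intro x
    change ‖VectorFourier.fourierIntegral Real.fourierChar volume
      (-innerₗ (EuclideanSpace ℝ (Fin 2)))
      (fun ξ : EuclideanSpace ℝ (Fin 2) => (Real.exp (-‖ξ‖ ^ α) : ℂ)) x‖ ≤ C
    exact VectorFourier.norm_fourierIntegral_le_integral_norm _ _ _ _ x
  set g : EuclideanSpace ℝ (Fin 2) → ℂ := fun u => Gprof α (B • u) with hg_def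
  have hgc : Continuous g := hGc.comp (continuous_const_smul B)
  have hgb : ∀ u, ‖g u‖ ≤ C := fun u => hGb _
  -- the dilated Schwartz function
  let dil : EuclideanSpace ℝ (Fin 2) ≃L[ℝ] EuclideanSpace ℝ (Fin 2) :=
    (LinearEquiv.smulOfNeZero ℝ _ e hene).toContinuousLinearEquiv
  set fe : SchwartzMap (EuclideanSpace ℝ (Fin 2)) ℂ :=
    SchwartzMap.compCLMOfContinuousLinearEquiv ℝ dil f with hfe_def
  have hfe_fun : ⇑fe = fun y => f (e • y) := rfl
  -- change of variables
  have hchg : ∀ (φ : EuclideanSpace ℝ (Fin 2) → ℂ) (η : EuclideanSpace ℝ (Fin 2)),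
      (∫ p : EuclideanSpace ℝ (Fin 2), Gprof α (B • (η - p)) * φ (e • p))
        = ∫ u : EuclideanSpace ℝ (Fin 2), g u * φ (e • (η - u)) := by
    intro φ η
    calc (∫ p : EuclideanSpace ℝ (Fin 2), Gprof α (B • (η - p)) * φ (e • p))
        = ∫ u : EuclideanSpace ℝ (Fin 2),
            Gprof α (B • (η - (η - u))) * φ (e • (η - u)) :=
          (integral_sub_left_eq_self
            (fun p => Gprof α (B • (η - p)) * φ (e • p)) volume η).symm
    _ = ∫ u : EuclideanSpace ℝ (Fin 2), g u * φ (e • (η - u)) := by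
        simp only [sub_sub_cancel, hg_def]
  -- representation of Sop
  have hrepr : Sop α τ ⇑f = fun η => c • ∫ u, g u • fe (η - u) := by
    funext η
    show c • (∫ p, Gprof α (B • (η - p)) * f (e • p)) = _
    rw [hchg (⇑f) η]
    simp only [smul_eq_mul, hfe_fun]
  -- derivative machinery
  have hd : ∀ η, HasFDerivAt (fun η => c • ∫ u, g u • fe (η - u))
      (c • ∫ u, g u • (SchwartzMap.fderivCLM ℝ _ _ fe) (η - u)) η :=
    fun η => (convC hgc hgb fe η).const_smul c
  have hfder : ∀ η, fderiv ℝ (Sop α τ ⇑f) η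
      = c • ∫ u, g u • (SchwartzMap.fderivCLM ℝ _ _ fe) (η - u) := by
    intro η
    rw [hrepr]
    exact (hd η).fderiv
  constructor
  · rw [hrepr, contDiff_one_iff_fderiv]
    refine ⟨fun η => (hd η).differentiableAt, ?_⟩
    have : (fderiv ℝ fun η => c • ∫ u, g u • fe (η - u))
        = fun η => c • ∫ u, g u • (SchwartzMap.fderivCLM ℝ _ _ fe) (η - u) :=
      funext fun η => (hd η).fderiv
    rw [this]
    exact (convB hgc hgb (SchwartzMap.fderivCLM ℝ _ _ fe)).const_smul c
  · intro η
    -- chain rule for the dilation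
    have hchain : ∀ x : EuclideanSpace ℝ (Fin 2), HasFDerivAt (⇑fe)
        ((fderiv ℝ (⇑f) (e • x)).comp (e • ContinuousLinearMap.id ℝ (EuclideanSpace ℝ (Fin 2)))) x := by
      intro x
      have h1 : HasFDerivAt (fun y : EuclideanSpace ℝ (Fin 2) => e • y)
          (e • ContinuousLinearMap.id ℝ (EuclideanSpace ℝ (Fin 2))) x :=
        (hasFDerivAt_id x).const_smul e
      have h2 : HasFDerivAt (⇑f) (fderiv ℝ (⇑f) (e • x)) (e • x) :=
        (f.differentiable.differentiableAt).hasFDerivAt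
      have h3 := h2.comp x h1
      rw [hfe_fun]
      exact h3
    have hptw : ∀ x : EuclideanSpace ℝ (Fin 2),
        fderiv ℝ (⇑fe) x (EuclideanSpace.single j 1)
          = (e : ℂ) * fderiv ℝ (⇑f) (e • x) (EuclideanSpace.single j 1) := by
      intro x
      rw [(hchain x).fderiv]
      rw [ContinuousLinearMap.comp_apply, ContinuousLinearMap.smul_apply,
        ContinuousLinearMap.id_apply, ContinuousLinearMap.map_smul]
      rw [Complex.real_smul]
    -- Left-hand side
    have hLHS : Sop α τ (fun x => fderiv ℝ (⇑f) x (EuclideanSpace.single j 1)) η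
        = c • ∫ u, g u * fderiv ℝ (⇑f) (e • (η - u)) (EuclideanSpace.single j 1) := by
      show c • (∫ p, Gprof α (B • (η - p)) * fderiv ℝ (⇑f) (e • p) (EuclideanSpace.single j 1)) = _
      rw [hchg (fun x => fderiv ℝ (⇑f) x (EuclideanSpace.single j 1)) η]
    rw [hLHS, hfder η]
    rw [ContinuousLinearMap.smul_apply,
      ContinuousLinearMap.integral_apply (convA hgc hgb (SchwartzMap.fderivCLM ℝ _ _ fe) η)]
    have hint : ∀ u : EuclideanSpace ℝ (Fin 2),
        (g u • (SchwartzMap.fderivCLM ℝ _ _ fe) (η - u)) (EuclideanSpace.single j 1)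
          = (e : ℂ) * (g u * fderiv ℝ (⇑f) (e • (η - u)) (EuclideanSpace.single j 1)) := by
      intro u
      rw [ContinuousLinearMap.smul_apply, SchwartzMap.fderivCLM_apply, hptw (η - u),
        smul_eq_mul]
      ring
    simp only [hint]
    rw [MeasureTheory.integral_const_mul]
    have hmul : ((Real.exp (-(τ / α)) : ℝ) : ℂ) * (e : ℂ) = 1 := by
      rw [he_def, ← Complex.ofReal_mul, ← Real.exp_add]
      norm_num
    set I : ℂ := ∫ u, g u * fderiv ℝ (⇑f) (e • (η - u)) (EuclideanSpace.single j 1) with hI_def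
    calc c • I = 1 * (c • I) := (one_mul _).symm
    _ = (((Real.exp (-(τ / α)) : ℝ) : ℂ) * (e : ℂ)) * (c • I) := by rw [hmul]
    _ = ((Real.exp (-(τ / α)) : ℝ) : ℂ) * ((e : ℂ) * (c • I)) := by ring
    _ = ((Real.exp (-(τ / α)) : ℝ) : ℂ) * (c • ((e : ℂ) * I)) := by
        rw [mul_smul_comm]
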